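/- Let U be an m×n real matrix, V a p×n real matrix, and Q a symmetric n×n real matrix. Then there exists a matrix X in R^{m×p} such that Q + Uᵀ X V + Vᵀ Xᵀ U = 0 if and only if both (i) xᵀ Q x = 0 for all x in ker U ∪ ker V, and (ii) ker U ∩ ker V ⊆ ker Q. -/

import Mathlib

open Matrix

/-- Projection onto `S` along a complement `T`, packaged existentially. -/
lemma proj_exists {E : Type*} [AddCommGroup E] [Module ℝ E]
    (S T : Submodule ℝ E) (h : IsCompl S T) :
    ∃ f : E →ₗ[ℝ] E, (∀ x, f x ∈ S) ∧ (∀ x ∈ S, f x = x) ∧ (∀ x ∈ T, f x = 0) := by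
  refine ⟨S.subtype ∘ₗ S.linearProjOfIsCompl T h,
    fun x => (S.linearProjOfIsCompl T h x).2, fun x hx => ?_, fun x hx => ?_⟩
  · have := Submodule.linearProjOfIsCompl_apply_left h ⟨x, hx⟩
    simp only [LinearMap.comp_apply, Submodule.subtype_apply]
    rw [show (x : E) = ((⟨x, hx⟩ : S) : E) from rfl]
    exact congrArg Subtype.val this
  · simp only [LinearMap.comp_apply, Submodule.subtype_apply]
    rw [show S.linearProjOfIsCompl T h x = 0 from Submodule.linearProjOfIsCompl_apply_right' h hx]
    rfl

/-- A linear map vanishing on the kernel of `f` factors through `f`. -/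
lemma factor_exists {E F G : Type*} [AddCommGroup E] [Module ℝ E]
    [AddCommGroup F] [Module ℝ F] [AddCommGroup G] [Module ℝ G]
    (f : E →ₗ[ℝ] F) (P : E →ₗ[ℝ] G) (h : ∀ x, f x = 0 → P x = 0) :
    ∃ g : F →ₗ[ℝ] G, ∀ x, g (f x) = P x := by
  obtain ⟨T, hT⟩ := Submodule.exists_isCompl (LinearMap.range f)
  obtain ⟨r, hr⟩ := f.rangeRestrict.exists_rightInverse_of_surjective
    (LinearMap.range_rangeRestrict f)
  refine ⟨P ∘ₗ r ∘ₗ (LinearMap.range f).linearProjOfIsCompl T hT, fun x => ?_⟩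
  have h1 : (LinearMap.range f).linearProjOfIsCompl T hT (f x)
      = ⟨f x, LinearMap.mem_range_self f x⟩ :=
    Submodule.linearProjOfIsCompl_apply_left hT ⟨f x, LinearMap.mem_range_self f x⟩
  simp only [LinearMap.comp_apply, h1]
  have h2 : f (r ⟨f x, LinearMap.mem_range_self f x⟩) = f x := by
    have := congrArg (fun (z : LinearMap.range f) => (z : F))
      (LinearMap.congr_fun hr ⟨f x, LinearMap.mem_range_self f x⟩)
    simpa using this
  have h3 : f (r ⟨f x, LinearMap.mem_range_self f x⟩ - x) = 0 := by
    rw [map_sub, h2, sub_self]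
  have h4 := h _ h3
  rw [map_sub] at h4
  exact sub_eq_zero.mp h4

theorem stmt_0 (m n p : ℕ) (U : Matrix (Fin m) (Fin n) ℝ)
    (V : Matrix (Fin p) (Fin n) ℝ) (Q : Matrix (Fin n) (Fin n) ℝ)
    (hQ : Q.IsSymm) :
    (∃ X : Matrix (Fin m) (Fin p) ℝ, Q + Uᵀ * X * V + Vᵀ * Xᵀ * U = 0) ↔
      ((∀ x : Fin n → ℝ, (U.mulVec x = 0 ∨ V.mulVec x = 0) →
          x ⬝ᵥ Q.mulVec x = 0) ∧
        (∀ x : Fin n → ℝ, U.mulVec x = 0 → V.mulVec x = 0 →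
          Q.mulVec x = 0)) := by
  have hUt : ∀ (x : Fin n → ℝ) (w : Fin m → ℝ), x ⬝ᵥ Uᵀ *ᵥ w = (U *ᵥ x) ⬝ᵥ w := by
    intro x w
    rw [dotProduct_mulVec, vecMul_transpose]
  have hVt : ∀ (x : Fin n → ℝ) (w : Fin p → ℝ), x ⬝ᵥ Vᵀ *ᵥ w = (V *ᵥ x) ⬝ᵥ w := by
    intro x w
    rw [dotProduct_mulVec, vecMul_transpose]
  have hQsym : ∀ a b : Fin n → ℝ, a ⬝ᵥ Q *ᵥ b = b ⬝ᵥ Q *ᵥ a := by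
    intro a b
    rw [dotProduct_mulVec, ← mulVec_transpose, hQ.eq, dotProduct_comm]
  constructor
  · rintro ⟨X, hX⟩
    have hmid : ∀ x y : Fin n → ℝ,
        x ⬝ᵥ (Uᵀ * X * V) *ᵥ y = (U *ᵥ x) ⬝ᵥ X *ᵥ (V *ᵥ y) := by
      intro x y
      rw [Matrix.mul_assoc, ← mulVec_mulVec, ← mulVec_mulVec, hUt]
    have hmid2 : ∀ x y : Fin n → ℝ,
        x ⬝ᵥ (Vᵀ * Xᵀ * U) *ᵥ y = (V *ᵥ x) ⬝ᵥ Xᵀ *ᵥ (U *ᵥ y) := by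
      intro x y
      rw [Matrix.mul_assoc, ← mulVec_mulVec, ← mulVec_mulVec, hVt]
    constructor
    · intro x hx
      have h := congrArg (fun M => x ⬝ᵥ M *ᵥ x) hX
      simp only [add_mulVec, dotProduct_add, Matrix.zero_mulVec, dotProduct_zero] at h
      rw [hmid, hmid2] at h
      rcases hx with hx | hx <;> rw [hx] at h <;>
        simp only [mulVec_zero, dotProduct_zero, zero_dotProduct] at h <;> linarith
    · intro x hU hV
      have h := congrArg (fun M => M *ᵥ x) hX
      simp only [add_mulVec, Matrix.zero_mulVec] at h
      rw [Matrix.mul_assoc, ← mulVec_mulVec, ← mulVec_mulVec, hV,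
        Matrix.mul_assoc, ← mulVec_mulVec, ← mulVec_mulVec, hU] at h
      simpa using h
  · rintro ⟨h1, h2⟩
    have hflip : ∀ (X : Matrix (Fin m) (Fin p) ℝ) (u : Fin m → ℝ) (v : Fin p → ℝ),
        v ⬝ᵥ Xᵀ *ᵥ u = u ⬝ᵥ X *ᵥ v := by
      intro X u v
      rw [dotProduct_mulVec, vecMul_transpose, dotProduct_comm]
    have hmidG : ∀ (X : Matrix (Fin m) (Fin p) ℝ) (x y : Fin n → ℝ),
        x ⬝ᵥ (Uᵀ * X * V) *ᵥ y = (U *ᵥ x) ⬝ᵥ X *ᵥ (V *ᵥ y) := by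
      intro X x y
      rw [Matrix.mul_assoc, ← mulVec_mulVec, ← mulVec_mulVec, hUt]
    have hmid2G : ∀ (X : Matrix (Fin m) (Fin p) ℝ) (x y : Fin n → ℝ),
        x ⬝ᵥ (Vᵀ * Xᵀ * U) *ᵥ y = (U *ᵥ y) ⬝ᵥ X *ᵥ (V *ᵥ x) := by
      intro X x y
      rw [Matrix.mul_assoc, ← mulVec_mulVec, ← mulVec_mulVec, hVt, hflip]
    have polU : ∀ u v : Fin n → ℝ, U *ᵥ u = 0 → U *ᵥ v = 0 → u ⬝ᵥ Q *ᵥ v = 0 := by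
      intro u v hu hv
      have h := h1 (u + v) (Or.inl (by rw [mulVec_add, hu, hv, add_zero]))
      rw [add_dotProduct, mulVec_add, dotProduct_add, dotProduct_add] at h
      have h3 := hQsym u v
      have h4 := h1 u (Or.inl hu)
      have h5 := h1 v (Or.inl hv)
      linarith
    have polV : ∀ u v : Fin n → ℝ, V *ᵥ u = 0 → V *ᵥ v = 0 → u ⬝ᵥ Q *ᵥ v = 0 := by
      intro u v hu hv
      have h := h1 (u + v) (Or.inr (by rw [mulVec_add, hu, hv, add_zero]))
      rw [add_dotProduct, mulVec_add, dotProduct_add, dotProduct_add] at h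
      have h3 := hQsym u v
      have h4 := h1 u (Or.inr hu)
      have h5 := h1 v (Or.inr hv)
      linarith
    -- subspaces
    set Ku := LinearMap.ker U.mulVecLin with hKu_def
    set Kv := LinearMap.ker V.mulVecLin with hKv_def
    have memKu : ∀ x, x ∈ Ku ↔ U *ᵥ x = 0 := by
      intro x; rw [hKu_def, LinearMap.mem_ker, Matrix.mulVecLin_apply]
    have memKv : ∀ x, x ∈ Kv ↔ V *ᵥ x = 0 := by
      intro x; rw [hKv_def, LinearMap.mem_ker, Matrix.mulVecLin_apply]
    set L := Ku ⊓ Kv with hL_def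
    obtain ⟨L', hL'⟩ := Submodule.exists_isCompl L
    set A := L' ⊓ Ku with hA_def
    set B := L' ⊓ Kv with hB_def
    have hKuLA : Ku = L ⊔ A := by
      have h := sup_inf_assoc_of_le (α := Submodule ℝ (Fin n → ℝ)) (x := L) L'
        (inf_le_left : L ≤ Ku)
      rw [hL'.codisjoint.eq_top, top_inf_eq] at h
      rw [h, hA_def, inf_comm]
    have hKvLB : Kv = L ⊔ B := by
      have h := sup_inf_assoc_of_le (α := Submodule ℝ (Fin n → ℝ)) (x := L) L'
        (inf_le_right : L ≤ Kv)
      rw [hL'.codisjoint.eq_top, top_inf_eq] at h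
      rw [h, hB_def, inf_comm]
    obtain ⟨D, hD⟩ := Submodule.exists_isCompl (L ⊔ A ⊔ B)
    have hindep : ∀ l ∈ L, ∀ a ∈ A, ∀ b ∈ B, ∀ d ∈ D,
        l + a + b + d = 0 → l = 0 ∧ a = 0 ∧ b = 0 ∧ d = 0 := by
      intro l hl a ha b hb d hd hsum
      have hlab : l + a + b ∈ L ⊔ A ⊔ B :=
        Submodule.add_mem _ (Submodule.add_mem _
          (Submodule.mem_sup_left (Submodule.mem_sup_left hl))
          (Submodule.mem_sup_left (Submodule.mem_sup_right ha)))
          (Submodule.mem_sup_right hb)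
      have hd0 : d = 0 := by
        have hdm : d ∈ L ⊔ A ⊔ B := by
          have h : d = -(l + a + b) := eq_neg_of_add_eq_zero_right hsum
          rw [h]; exact Submodule.neg_mem _ hlab
        exact (Submodule.disjoint_def.mp hD.disjoint) d hdm hd
      rw [hd0, add_zero] at hsum
      have hb0 : b = 0 := by
        have hbKu : b ∈ Ku := by
          have h : b = -(l + a) := eq_neg_of_add_eq_zero_right hsum
          rw [h, hKuLA]
          exact Submodule.neg_mem _ (Submodule.add_mem _
            (Submodule.mem_sup_left hl) (Submodule.mem_sup_right ha))
        have hbL : b ∈ L := by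
          rw [hL_def]
          exact Submodule.mem_inf.mpr ⟨hbKu, (Submodule.mem_inf.mp hb).2⟩
        exact (Submodule.disjoint_def.mp hL'.disjoint) b hbL
          (Submodule.mem_inf.mp hb).1
      rw [hb0, add_zero] at hsum
      have ha0 : a = 0 := by
        have haL : a ∈ L := by
          have h : a = -l := eq_neg_of_add_eq_zero_right hsum
          rw [h]; exact Submodule.neg_mem _ hl
        exact (Submodule.disjoint_def.mp hL'.disjoint) a haL
          (Submodule.mem_inf.mp ha).1
      rw [ha0, add_zero] at hsum
      exact ⟨hsum, ha0, hb0, hd0⟩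
    have htop : L ⊔ A ⊔ B ⊔ D = ⊤ := hD.codisjoint.eq_top
    have c0 : IsCompl L (A ⊔ B ⊔ D) := by
      constructor
      · rw [Submodule.disjoint_def]
        intro x hxL hx
        rcases Submodule.mem_sup.mp hx with ⟨w, hw, d, hd, rfl⟩
        rcases Submodule.mem_sup.mp hw with ⟨a, ha, b, hb, rfl⟩
        have h := hindep (-(a + b + d)) (Submodule.neg_mem _ hxL) a ha b hb d hd
          (by abel)
        rw [neg_eq_zero] at h
        exact h.1
      · rw [codisjoint_iff, ← htop]
        ac_rfl
    have c1 : IsCompl A (L ⊔ B ⊔ D) := by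
      constructor
      · rw [Submodule.disjoint_def]
        intro x hxA hx
        rcases Submodule.mem_sup.mp hx with ⟨w, hw, d, hd, rfl⟩
        rcases Submodule.mem_sup.mp hw with ⟨l, hl, b, hb, rfl⟩
        have h := hindep l hl (-(l + b + d)) (Submodule.neg_mem _ hxA) b hb d hd
          (by abel)
        rw [neg_eq_zero] at h
        exact h.2.1
      · rw [codisjoint_iff, ← htop]
        ac_rfl
    have c2 : IsCompl B (L ⊔ A ⊔ D) := by
      constructor
      · rw [Submodule.disjoint_def]
        intro x hxB hx
        rcases Submodule.mem_sup.mp hx with ⟨w, hw, d, hd, rfl⟩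
        rcases Submodule.mem_sup.mp hw with ⟨l, hl, a, ha, rfl⟩
        have h := hindep l hl a ha (-(l + a + d)) (Submodule.neg_mem _ hxB) d hd
          (by abel)
        rw [neg_eq_zero] at h
        exact h.2.2.1
      · rw [codisjoint_iff, ← htop]
        ac_rfl
    obtain ⟨π₀, hπ₀mem, hπ₀left, hπ₀zero⟩ := proj_exists L (A ⊔ B ⊔ D) c0
    obtain ⟨π₁, hπ₁mem, hπ₁left, hπ₁zero⟩ := proj_exists A (L ⊔ B ⊔ D) c1
    obtain ⟨π₂, hπ₂mem, hπ₂left, hπ₂zero⟩ := proj_exists B (L ⊔ A ⊔ D) c2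
    obtain ⟨π₃, hπ₃mem, hπ₃left, hπ₃zero⟩ := proj_exists D (L ⊔ A ⊔ B) hD.symm
    have hsum_id : ∀ x : Fin n → ℝ, π₀ x + π₁ x + π₂ x + π₃ x = x := by
      intro x
      have hx : x ∈ L ⊔ A ⊔ B ⊔ D := htop ▸ Submodule.mem_top
      rcases Submodule.mem_sup.mp hx with ⟨w, hw, d, hd, rfl⟩
      rcases Submodule.mem_sup.mp hw with ⟨y, hy, b, hb, rfl⟩
      rcases Submodule.mem_sup.mp hy with ⟨l, hl, a, ha, rfl⟩
      have e0 : π₀ (l + a + b + d) = l := by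
        rw [map_add, map_add, map_add, hπ₀left l hl,
          hπ₀zero a (Submodule.mem_sup_left (Submodule.mem_sup_left ha)),
          hπ₀zero b (Submodule.mem_sup_left (Submodule.mem_sup_right hb)),
          hπ₀zero d (Submodule.mem_sup_right hd)]
        abel
      have e1 : π₁ (l + a + b + d) = a := by
        rw [map_add, map_add, map_add, hπ₁left a ha,
          hπ₁zero l (Submodule.mem_sup_left (Submodule.mem_sup_left hl)),
          hπ₁zero b (Submodule.mem_sup_left (Submodule.mem_sup_right hb)),
          hπ₁zero d (Submodule.mem_sup_right hd)]
        abel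
      have e2 : π₂ (l + a + b + d) = b := by
        rw [map_add, map_add, map_add, hπ₂left b hb,
          hπ₂zero l (Submodule.mem_sup_left (Submodule.mem_sup_left hl)),
          hπ₂zero a (Submodule.mem_sup_left (Submodule.mem_sup_right ha)),
          hπ₂zero d (Submodule.mem_sup_right hd)]
        abel
      have e3 : π₃ (l + a + b + d) = d := by
        rw [map_add, map_add, map_add, hπ₃left d hd,
          hπ₃zero l (Submodule.mem_sup_left (Submodule.mem_sup_left hl)),
          hπ₃zero a (Submodule.mem_sup_left (Submodule.mem_sup_right ha)),
          hπ₃zero b (Submodule.mem_sup_right hb)]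
        abel
      rw [e0, e1, e2, e3]
    -- projection composition laws
    have p11 : ∀ x, π₁ (π₁ x) = π₁ x := fun x => hπ₁left _ (hπ₁mem x)
    have p22 : ∀ x, π₂ (π₂ x) = π₂ x := fun x => hπ₂left _ (hπ₂mem x)
    have p33 : ∀ x, π₃ (π₃ x) = π₃ x := fun x => hπ₃left _ (hπ₃mem x)
    have p13 : ∀ x, π₁ (π₃ x) = 0 := fun x =>
      hπ₁zero _ (Submodule.mem_sup_right (hπ₃mem x))
    have p23 : ∀ x, π₂ (π₃ x) = 0 := fun x =>
      hπ₂zero _ (Submodule.mem_sup_right (hπ₃mem x))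
    have p31 : ∀ x, π₃ (π₁ x) = 0 := fun x =>
      hπ₃zero _ (Submodule.mem_sup_left (Submodule.mem_sup_right (hπ₁mem x)))
    have p32 : ∀ x, π₃ (π₂ x) = 0 := fun x =>
      hπ₃zero _ (Submodule.mem_sup_right (hπ₂mem x))
    -- kernel facts
    have kerπ₂ : ∀ x, U *ᵥ x = 0 → π₂ x = 0 := by
      intro x hx
      refine hπ₂zero x ?_
      have hm : x ∈ Ku := (memKu x).mpr hx
      rw [hKuLA] at hm
      exact Submodule.mem_sup_left hm
    have kerπ₃U : ∀ x, U *ᵥ x = 0 → π₃ x = 0 := by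
      intro x hx
      refine hπ₃zero x ?_
      have hm : x ∈ Ku := (memKu x).mpr hx
      rw [hKuLA] at hm
      exact Submodule.mem_sup_left hm
    have kerπ₁ : ∀ x, V *ᵥ x = 0 → π₁ x = 0 := by
      intro x hx
      refine hπ₁zero x ?_
      have hm : x ∈ Kv := (memKv x).mpr hx
      rw [hKvLB] at hm
      exact Submodule.mem_sup_left hm
    have kerπ₃V : ∀ x, V *ᵥ x = 0 → π₃ x = 0 := by
      intro x hx
      refine hπ₃zero x ?_
      have hm : x ∈ Kv := (memKv x).mpr hx
      rw [hKvLB] at hm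
      rcases Submodule.mem_sup.mp hm with ⟨l, hl, b, hb, rfl⟩
      exact Submodule.add_mem _ (Submodule.mem_sup_left (Submodule.mem_sup_left hl))
        (Submodule.mem_sup_right hb)
    -- range facts in terms of U, V, Q
    have hπ₀U : ∀ x, U *ᵥ (π₀ x) = 0 := fun x =>
      (memKu _).mp (Submodule.mem_inf.mp (hπ₀mem x)).1
    have hπ₀V : ∀ x, V *ᵥ (π₀ x) = 0 := fun x =>
      (memKv _).mp (Submodule.mem_inf.mp (hπ₀mem x)).2
    have hπ₁U : ∀ x, U *ᵥ (π₁ x) = 0 := fun x =>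
      (memKu _).mp (Submodule.mem_inf.mp (hπ₁mem x)).2
    have hπ₂V : ∀ x, V *ᵥ (π₂ x) = 0 := fun x =>
      (memKv _).mp (Submodule.mem_inf.mp (hπ₂mem x)).2
    -- factor maps
    obtain ⟨gu, hgu⟩ := factor_exists U.mulVecLin (π₂ + π₃)
      (by
        intro x hx
        rw [Matrix.mulVecLin_apply] at hx
        simp only [LinearMap.add_apply, kerπ₂ x hx, kerπ₃U x hx, add_zero])
    obtain ⟨gv, hgv⟩ := factor_exists V.mulVecLin (π₁ + π₃)
      (by
        intro x hx
        rw [Matrix.mulVecLin_apply] at hx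
        simp only [LinearMap.add_apply, kerπ₁ x hx, kerπ₃V x hx, add_zero])
    have hgu' : ∀ x, gu (U *ᵥ x) = π₂ x + π₃ x := by
      intro x
      have h := hgu x
      rwa [Matrix.mulVecLin_apply, LinearMap.add_apply] at h
    have hgv' : ∀ x, gv (V *ᵥ x) = π₁ x + π₃ x := by
      intro x
      have h := hgv x
      rwa [Matrix.mulVecLin_apply, LinearMap.add_apply] at h
    -- the bilinear form Q
    set Qb : (Fin n → ℝ) →ₗ[ℝ] (Fin n → ℝ) →ₗ[ℝ] ℝ := LinearMap.mk₂ ℝ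
      (fun v w => v ⬝ᵥ Q *ᵥ w)
      (by intros; simp [add_dotProduct])
      (by intros; simp [smul_dotProduct])
      (by intros; simp [mulVec_add, dotProduct_add])
      (by intros; simp [mulVec_smul, dotProduct_smul]) with hQb_def
    have hQb_apply : ∀ v w, Qb v w = v ⬝ᵥ Q *ᵥ w := fun v w => rfl
    have hQbsym : ∀ a b, Qb a b = Qb b a := by
      intro a b; rw [hQb_apply, hQb_apply, hQsym]
    have hq0l : ∀ a b, Qb (π₀ a) b = 0 := by
      intro a b
      rw [hQb_apply, hQsym, h2 (π₀ a) (hπ₀U a) (hπ₀V a), dotProduct_zero]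
    have hq0r : ∀ a b, Qb a (π₀ b) = 0 := by
      intro a b
      rw [hQb_apply, h2 (π₀ b) (hπ₀U b) (hπ₀V b), dotProduct_zero]
    have hq11 : ∀ a b, Qb (π₁ a) (π₁ b) = 0 := fun a b =>
      polU _ _ (hπ₁U a) (hπ₁U b)
    have hq22 : ∀ a b, Qb (π₂ a) (π₂ b) = 0 := fun a b =>
      polV _ _ (hπ₂V a) (hπ₂V b)
    -- the bilinear form β
    set β : (Fin m → ℝ) →ₗ[ℝ] (Fin p → ℝ) →ₗ[ℝ] ℝ := LinearMap.mk₂ ℝ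
      (fun u v => -Qb (π₂ (gu u)) (π₁ (gv v)) - Qb (π₃ (gu u)) (π₁ (gv v))
        - Qb (π₂ (gu u)) (π₃ (gv v)) - (1/2) * Qb (π₃ (gu u)) (π₃ (gv v)))
      (by
        intro u u' v
        simp only [map_add, LinearMap.add_apply]
        ring)
      (by
        intro c u v
        simp only [_root_.map_smul, LinearMap.smul_apply, smul_eq_mul]
        ring)
      (by
        intro u v v'
        simp only [map_add, LinearMap.add_apply]
        ring)
      (by
        intro u c v
        simp only [_root_.map_smul, LinearMap.smul_apply, smul_eq_mul]
        ring) with hβ_def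
    have hβ_eval : ∀ a b : Fin n → ℝ, β (U *ᵥ a) (V *ᵥ b)
        = -Qb (π₂ a) (π₁ b) - Qb (π₃ a) (π₁ b) - Qb (π₂ a) (π₃ b)
          - (1/2) * Qb (π₃ a) (π₃ b) := by
      intro a b
      rw [hβ_def]
      rw [LinearMap.mk₂_apply, hgu', hgv']
      simp only [map_add, p11, p22, p33, p13, p23, p31, p32, add_zero, zero_add,
        map_zero, LinearMap.zero_apply]
    -- the key scalar identity
    have key : ∀ x y : Fin n → ℝ,
        x ⬝ᵥ Q *ᵥ y + β (U *ᵥ x) (V *ᵥ y) + β (U *ᵥ y) (V *ᵥ x) = 0 := by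
      intro x y
      have hq : Qb x y = Qb (π₁ x) (π₂ y) + Qb (π₁ x) (π₃ y) + Qb (π₂ x) (π₁ y)
          + Qb (π₂ x) (π₃ y) + Qb (π₃ x) (π₁ y) + Qb (π₃ x) (π₂ y)
          + Qb (π₃ x) (π₃ y) := by
        conv_lhs => rw [← hsum_id x, ← hsum_id y]
        simp only [map_add, LinearMap.add_apply, hq0l, hq0r, hq11, hq22]
        ring
      rw [← hQb_apply, hq, hβ_eval x y, hβ_eval y x,
        hQbsym (π₂ y) (π₁ x), hQbsym (π₃ y) (π₁ x), hQbsym (π₂ y) (π₃ x),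
        hQbsym (π₃ y) (π₃ x)]
      ring
    -- conclusion
    refine ⟨LinearMap.toMatrix₂' ℝ β, ?_⟩
    set X : Matrix (Fin m) (Fin p) ℝ := LinearMap.toMatrix₂' ℝ β with hX_def
    have hXdot : ∀ (v : Fin m → ℝ) (w : Fin p → ℝ), v ⬝ᵥ X *ᵥ w = β v w := by
      intro v w
      rw [hX_def, ← Matrix.toLinearMap₂'_apply', Matrix.toLinearMap₂'_toMatrix']
    have keyM : ∀ x y : Fin n → ℝ,
        x ⬝ᵥ (Q + Uᵀ * X * V + Vᵀ * Xᵀ * U) *ᵥ y = 0 := by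
      intro x y
      rw [add_mulVec, add_mulVec, dotProduct_add, dotProduct_add,
        hmidG, hmid2G, hXdot, hXdot]
      exact key x y
    ext i j
    have h := keyM (Pi.single i 1) (Pi.single j 1)
    rw [mulVec_single, single_dotProduct] at h
    simpa using h
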